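/- For an odd positive integer n, if xⁿ - 1 factors into r distinct monic irreducible factors over ℤ/2, then the number of ideals (cyclic codes) of (ℤ/4)[x]/(xⁿ-1) is 3^r. -/

import Mathlib

open Polynomial

noncomputable section CyclicCodesAux
def phi : ZMod 4 →+* ZMod 2 := ZMod.castHom (show 2 ∣ 4 by norm_num) (ZMod 2)
lemma phi_apply (a : ZMod 4) : phi a = (a.val : ZMod 2) := by
  rw [phi, ZMod.castHom_apply, ZMod.cast_eq_val]
lemma phi_surj : Function.Surjective phi := by
  intro b; fin_cases b
  · exact ⟨0, by rw [phi_apply]; rfl⟩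
  · exact ⟨1, by rw [phi_apply]; rfl⟩
lemma pmap_surj : Function.Surjective (Polynomial.map phi) :=
  Polynomial.map_surjective phi phi_surj
lemma elt_half (a : ZMod 4) (h : phi a = 0) : 2 * ((a.val / 2 : ℕ) : ZMod 4) = a := by
  rw [phi_apply] at h; revert h; revert a; decide
lemma phi_two : phi 2 = 0 := by rw [phi_apply]; decide

lemma elt_two_mul (a : ZMod 4) : 2 * a = 0 ↔ phi a = 0 := by
  rw [phi_apply]; fin_cases a <;> decide

lemma two_mul_eq_zero_iff (q : Polynomial (ZMod 4)) :
    C (2 : ZMod 4) * q = 0 ↔ q.map phi = 0 := by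
  constructor <;> intro h <;> ext i
  · have := congrArg (fun r => Polynomial.coeff r i) h
    simp only [coeff_C_mul, coeff_zero] at this
    simp [coeff_map, (elt_two_mul _).1 this]
  · have := congrArg (fun r => Polynomial.coeff r i) h
    simp only [coeff_map, coeff_zero] at this
    simp [coeff_C_mul, (elt_two_mul _).2 this]

lemma exists_of_map_zero (q : Polynomial (ZMod 4)) (h : q.map phi = 0) :
    ∃ e, q = C 2 * e := by
  refine ⟨q.sum fun i a => C ((a.val / 2 : ℕ) : ZMod 4) * X ^ i, ?_⟩
  rw [Polynomial.sum_def, Finset.mul_sum]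
  conv_lhs => rw [← Polynomial.sum_C_mul_X_pow_eq q, Polynomial.sum_def]
  refine Finset.sum_congr rfl fun i hi => ?_
  have hc : phi (q.coeff i) = 0 := by
    have := congrArg (fun r => Polynomial.coeff r i) h
    simpa [coeff_map] using this
  rw [← mul_assoc, ← C_mul, elt_half _ hc]

lemma C2_mul_C2 : (C (2 : ZMod 4)) * C 2 = 0 := by
  rw [← C_mul]; norm_num; decide

lemma isUnit_of_map_one (u : Polynomial (ZMod 4)) (h : u.map phi = 1) : IsUnit u := by
  obtain ⟨w, hw⟩ := exists_of_map_zero (u - 1) (by rw [Polynomial.map_sub, h]; simp)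
  have hu : u = 1 + C 2 * w := by linear_combination hw
  refine IsUnit.of_mul_eq_one (1 - C 2 * w) ?_
  rw [hu]; ring_nf
  rw [show C (2:ZMod 4) ^ 2 = C 2 * C 2 by ring, C2_mul_C2]
  ring

lemma isCoprime_lift {x y : Polynomial (ZMod 4)}
    (h : IsCoprime (x.map phi) (y.map phi)) : IsCoprime x y := by
  obtain ⟨a, b, hab⟩ := h
  obtain ⟨a', ha'⟩ := pmap_surj a
  obtain ⟨b', hb'⟩ := pmap_surj b
  have hmap : (a' * x + b' * y).map phi = 1 := by
    simp [Polynomial.map_add, Polynomial.map_mul, ha', hb', hab]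
  obtain ⟨v, hv⟩ := (isUnit_of_map_one _ hmap).exists_left_inv
  exact ⟨v * a', v * b', by linear_combination hv⟩

lemma hensel_step (F : Polynomial (ZMod 4)) (p q : Polynomial (ZMod 2))
    (hco : IsCoprime p q) (hF : F.map phi = p * q) :
    ∃ G H, F = G * H ∧ G.map phi = p ∧ H.map phi = q := by
  obtain ⟨h1, hh1⟩ := pmap_surj p
  obtain ⟨h2, hh2⟩ := pmap_surj q
  obtain ⟨e, he⟩ := exists_of_map_zero (F - h1 * h2)
    (by rw [Polynomial.map_sub, Polynomial.map_mul, hh1, hh2, hF]; ring)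
  obtain ⟨u, v, huv⟩ := hco
  obtain ⟨d, hd⟩ := pmap_surj (e.map phi * v)
  obtain ⟨c, hc⟩ := pmap_surj (e.map phi * u)
  refine ⟨h1 + C 2 * d, h2 + C 2 * c, ?_, ?_, ?_⟩
  · have hz : C (2:ZMod 4) * (d * h2 + c * h1 - e) = 0 := by
      rw [two_mul_eq_zero_iff]
      simp only [Polynomial.map_sub, Polynomial.map_add, Polynomial.map_mul, hh1, hh2, hd, hc]
      linear_combination (e.map phi) * huv
    have h4 : C (2:ZMod 4) * d * (C 2 * c) = 0 := by
      rw [show C (2:ZMod 4) * d * (C 2 * c) = (C 2 * C 2) * (d * c) by ring, C2_mul_C2,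
        zero_mul]
    have : F = h1 * h2 + C 2 * e := by linear_combination he
    rw [this]
    linear_combination -hz - h4
  · rw [Polynomial.map_add, Polynomial.map_mul, hh1, map_C, phi_two]
    simp
  · rw [Polynomial.map_add, Polynomial.map_mul, hh2, map_C, phi_two]
    simp


lemma local_card (G : Polynomial (ZMod 4)) (hirr : Irreducible (G.map phi)) :
    Nat.card (Ideal (Polynomial (ZMod 4) ⧸ Ideal.span {G})) = 3 := by
  set p := G.map phi with hp
  set I0 : Ideal (Polynomial (ZMod 4)) := Ideal.span {G} with hI0
  set π : Polynomial (ZMod 4) →+* Polynomial (ZMod 4) ⧸ I0 := Ideal.Quotient.mk I0 with hπ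
  have πsurj : Function.Surjective π := Ideal.Quotient.mk_surjective
  set t : Polynomial (ZMod 4) ⧸ I0 := π (C 2) with ht
  set J : Ideal (Polynomial (ZMod 4) ⧸ I0) := Ideal.span {t} with hJ
  have πzero : ∀ x : Polynomial (ZMod 4), π x = 0 ↔ G ∣ x := by
    intro x
    rw [hπ, Ideal.Quotient.eq_zero_iff_mem, hI0, Ideal.mem_span_singleton]
  have mapC2 : ∀ b : Polynomial (ZMod 4), (C 2 * b).map phi = 0 := by
    intro b; rw [Polynomial.map_mul, map_C, phi_two]; simp
  have memJ : ∀ x : Polynomial (ZMod 4), π x ∈ J ↔ p ∣ x.map phi := by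
    intro x
    constructor
    · intro hx
      rw [hJ, Ideal.mem_span_singleton] at hx
      obtain ⟨y, hy⟩ := hx
      obtain ⟨b, rfl⟩ := πsurj y
      rw [ht, ← map_mul, eq_comm] at hy
      have : π (x - C 2 * b) = 0 := by rw [map_sub, hy]; ring
      obtain ⟨a, ha⟩ := (πzero _).1 this
      have hx2 : x = G * a + C 2 * b := by linear_combination ha
      rw [hx2, Polynomial.map_add, Polynomial.map_mul, mapC2, add_zero]
      exact Dvd.intro _ rfl
    · intro hx
      obtain ⟨cb, hcb⟩ := hx
      obtain ⟨c, hc⟩ := pmap_surj cb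
      have : (x - G * c).map phi = 0 := by
        rw [Polynomial.map_sub, Polynomial.map_mul, hc, ← hcb]; ring
      obtain ⟨b, hb⟩ := exists_of_map_zero _ this
      have hx2 : x = G * c + C 2 * b := by linear_combination hb
      rw [hx2, map_add]
      refine Ideal.add_mem _ ?_ ?_
      · rw [(πzero _).2 ⟨c, rfl⟩]; exact J.zero_mem
      · rw [map_mul]; exact Ideal.mem_span_singleton.2 ⟨π b, rfl⟩
  have tsq : t * t = 0 := by
    rw [ht, ← map_mul, C2_mul_C2, map_zero]
  have unit_one_add : ∀ z : Polynomial (ZMod 4) ⧸ I0, IsUnit (1 + t * z) := by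
    intro z
    refine IsUnit.of_mul_eq_one (1 - t * z) ?_
    have : (1 + t * z) * (1 - t * z) = 1 - (t * t) * (z * z) := by ring
    rw [this, tsq]; ring
  have t_ne : t ≠ 0 := by
    intro h
    obtain ⟨d, hd⟩ := (πzero _).1 h
    have h1 : (0 : Polynomial (ZMod 2)) = p * d.map phi := by
      have := congrArg (Polynomial.map phi) hd
      rw [Polynomial.map_mul] at this
      rw [← this, map_C, phi_two, map_zero]
    have hd0 : d.map phi = 0 := by
      rcases mul_eq_zero.1 h1.symm with h' | h'
      · exact absurd h' hirr.ne_zero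
      · exact h'
    obtain ⟨d', hd'⟩ := exists_of_map_zero d hd0
    have h2 : C (2 : ZMod 4) * (1 - G * d') = 0 := by
      rw [hd'] at hd
      linear_combination hd
    rw [two_mul_eq_zero_iff] at h2
    rw [Polynomial.map_sub, Polynomial.map_one, Polynomial.map_mul, sub_eq_zero] at h2
    exact hirr.not_isUnit (IsUnit.of_mul_eq_one _ h2.symm)
  have not_mem_unit : ∀ x : Polynomial (ZMod 4) ⧸ I0, x ∉ J → IsUnit x := by
    intro x hx
    obtain ⟨f, rfl⟩ := πsurj x
    rw [memJ] at hx
    rcases (EuclideanDomain.dvd_or_coprime p (f.map phi) hirr) with h | h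
    · exact absurd h hx
    · obtain ⟨a, b, hab⟩ := h
      obtain ⟨b', hb'⟩ := pmap_surj b
      have : p ∣ (b' * f - 1).map phi := by
        rw [Polynomial.map_sub, Polynomial.map_mul, hb', Polynomial.map_one]
        exact ⟨-a, by linear_combination hab⟩
      rw [← memJ, map_sub, map_mul, map_one] at this
      rw [hJ, Ideal.mem_span_singleton] at this
      obtain ⟨z, hz⟩ := this
      have hmul : π b' * π f = 1 + t * z := by linear_combination hz
      have : IsUnit (π b' * π f) := hmul ▸ unit_one_add z
      exact isUnit_of_mul_isUnit_right this
  have classify : ∀ I : Ideal (Polynomial (ZMod 4) ⧸ I0), I = ⊥ ∨ I = J ∨ I = ⊤ := by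
    intro I
    by_cases hIJ : I ≤ J
    · by_cases hbot : I = ⊥
      · exact Or.inl hbot
      · refine Or.inr (Or.inl (le_antisymm hIJ ?_))
        obtain ⟨x, hxI, hx0⟩ := Submodule.exists_mem_ne_zero_of_ne_bot hbot
        obtain ⟨y, hy⟩ := Ideal.mem_span_singleton.1 (hIJ hxI)
        have hyJ : y ∉ J := by
          intro hyJ
          obtain ⟨z, hz⟩ := Ideal.mem_span_singleton.1 hyJ
          exact hx0 (by rw [hy, hz, ← mul_assoc, tsq, zero_mul])
        obtain ⟨v, hv⟩ := (not_mem_unit y hyJ).exists_right_inv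
        have : t = x * v := by rw [hy, mul_assoc, hv, mul_one]
        rw [hJ, Ideal.span_singleton_le_iff_mem, this]
        exact I.mul_mem_right v hxI
    · obtain ⟨x, hxI, hxJ⟩ := SetLike.not_le_iff_exists.1 hIJ
      exact Or.inr (Or.inr (Ideal.eq_top_of_isUnit_mem I hxI (not_mem_unit x hxJ)))
  have hJbot : J ≠ ⊥ := by
    intro h
    exact t_ne (by rw [← Ideal.span_singleton_eq_bot, ← hJ, h])
  have hJtop : J ≠ ⊤ := by
    intro h
    have h1 : π 1 ∈ J := by rw [h]; trivial
    rw [memJ, Polynomial.map_one] at h1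
    exact hirr.not_isUnit (isUnit_of_dvd_one h1)
  have hbt : (⊥ : Ideal (Polynomial (ZMod 4) ⧸ I0)) ≠ ⊤ := by
    intro h
    exact hJtop (le_antisymm le_top (h ▸ bot_le))
  rw [← Set.ncard_univ]
  have huniv : (Set.univ : Set (Ideal (Polynomial (ZMod 4) ⧸ I0))) = {⊥, J, ⊤} := by
    ext I
    simp only [Set.mem_univ, Set.mem_insert_iff, Set.mem_singleton_iff, true_iff]
    exact classify I
  rw [huniv, Set.ncard_insert_of_notMem (by simp [hJbot.symm, hbt]),
    Set.ncard_pair hJtop]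


def idealCongr {R S : Type*} [CommRing R] [CommRing S] (e : R ≃+* S) :
    Ideal R ≃ Ideal S where
  toFun I := I.map (e : R →+* S)
  invFun J := J.map (e.symm : S →+* R)
  left_inv I := Ideal.map_of_equiv e
  right_inv J := by simpa using Ideal.map_of_equiv e.symm (I := J)

lemma key (T : Finset (Polynomial (ZMod 2))) (hT : ∀ p ∈ T, p.Monic ∧ Irreducible p)
    (F : Polynomial (ZMod 4)) (hF : F.map phi = ∏ p ∈ T, p) :
    Nat.card (Ideal (Polynomial (ZMod 4) ⧸ Ideal.span {F})) = 3 ^ T.card := by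
  induction T using Finset.induction_on generalizing F with
  | empty =>
      rw [Finset.prod_empty] at hF
      have htop : Ideal.span {F} = ⊤ :=
        Ideal.span_singleton_eq_top.2 (isUnit_of_map_one F hF)
      haveI : Subsingleton (Polynomial (ZMod 4) ⧸ Ideal.span {F}) :=
        Ideal.Quotient.subsingleton_iff.2 htop
      haveI := uniqueOfSubsingleton
        (⊥ : Ideal (Polynomial (ZMod 4) ⧸ Ideal.span {F}))
      simp [Nat.card_unique]
  | @insert a s ha IH =>
      have hT' : ∀ p ∈ s, p.Monic ∧ Irreducible p := fun p hp => hT p (Finset.mem_insert_of_mem hp)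
      have haT := hT a (Finset.mem_insert_self a s)
      rw [Finset.prod_insert ha] at hF
      have hco : IsCoprime a (∏ p ∈ s, p) := by
        refine IsCoprime.prod_right fun i hi => ?_
        rcases EuclideanDomain.dvd_or_coprime a i haT.2 with h | h
        · have heq : a = i :=
            Polynomial.eq_of_monic_of_associated haT.1 (hT' i hi).1
              (haT.2.associated_of_dvd (hT' i hi).2 h)
          exact absurd (heq ▸ hi) ha
        · exact h
      obtain ⟨G, H, hFGH, hG, hH⟩ := hensel_step F a (∏ p ∈ s, p) hco hF
      have hcoGH : IsCoprime G H := isCoprime_lift (by rw [hG, hH]; exact hco)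
      have hsp : Ideal.span {F} = Ideal.span {G} ⊓ Ideal.span {H} := by
        rw [Ideal.inf_eq_mul_of_isCoprime ((Ideal.isCoprime_span_singleton_iff _ _).2 hcoGH),
          Ideal.span_singleton_mul_span_singleton, hFGH]
      have e := (Ideal.quotEquivOfEq hsp).trans
        (Ideal.quotientInfEquivQuotientProd (Ideal.span {G}) (Ideal.span {H})
          ((Ideal.isCoprime_span_singleton_iff _ _).2 hcoGH))
      rw [Nat.card_congr (idealCongr e), Nat.card_congr Ideal.idealProdEquiv.toEquiv, Nat.card_prod,
        local_card G (hG ▸ haT.2), IH hT' H hH, Finset.card_insert_of_notMem ha, pow_succ,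
        mul_comm]

end CyclicCodesAux

theorem number_of_cyclic_codes (n : ℕ) (hn : Odd n) (hpos : 0 < n)
    (S : Finset (Polynomial (ZMod 2)))
    (hirr : ∀ p ∈ S, p.Monic ∧ Irreducible p)
    (hprod : ∏ p ∈ S, p = (X ^ n - 1 : Polynomial (ZMod 2))) :
    Nat.card
      (Ideal (Polynomial (ZMod 4) ⧸ Ideal.span {(X ^ n - 1 : Polynomial (ZMod 4))})) =
      3 ^ S.card := by
  have hmap : (X ^ n - 1 : Polynomial (ZMod 4)).map phi = ∏ p ∈ S, p := by
    rw [hprod, Polynomial.map_sub, Polynomial.map_pow, Polynomial.map_X, Polynomial.map_one]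
  exact key S hirr _ hmap
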